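/- Suppose f : ℝ^d → ℝ has the convex sublevel approximation property (CSAP) outside B̄(0,R) with respect to a norm ‖·‖ on ℝ^d. Then f has the peakless sublevel property (PSP) outside B̄(0,R): there exist constants s₀, c_f > 0 such that for every x with ‖x‖ > R and every s ∈ (0,s₀), λ^d({y : f(y) ≤ f(x)} ∩ B(x,s)) ≥ c_f · λ^d(B(x,s)). -/

import Mathlib

open MeasureTheory Metric Pointwise

/-- If `f` has the convex sublevel approximation property (CSAP) outside
`B̄(0,R)` (witnessed by a bounded convex set `C` with nonempty interior, Euclidean motions
`φ_x` and scales `a_x ≥ 1`), then `f` has the peakless sublevel property (PSP) outside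
`B̄(0,R)`. -/
theorem stmt7 (d : ℕ) (f : EuclideanSpace ℝ (Fin d) → ℝ) (R : ℝ) (hR : 0 < R)
    (C : Set (EuclideanSpace ℝ (Fin d)))
    (hC : Convex ℝ C) (hB : Bornology.IsBounded C) (hint : (interior C).Nonempty)
    (hcsap : ∀ x : EuclideanSpace ℝ (Fin d), R < ‖x‖ →
      ∃ φ : EuclideanSpace ℝ (Fin d) ≃ᵢ EuclideanSpace ℝ (Fin d), ∃ a : ℝ, 1 ≤ a ∧
        x ∈ φ '' (a • C) ∧ φ '' (a • C) ⊆ {y | f y ≤ f x}) :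
    ∃ s₀ > (0 : ℝ), ∃ c > (0 : ℝ), ∀ x : EuclideanSpace ℝ (Fin d), R < ‖x‖ →
      ∀ s ∈ Set.Ioo (0 : ℝ) s₀,
        ENNReal.ofReal c * volume (ball x s) ≤ volume ({y | f y ≤ f x} ∩ ball x s) := by
  rcases Nat.eq_zero_or_pos d with rfl | hd
  · refine ⟨1, one_pos, 1, one_pos, fun x hx => ?_⟩
    have : x = 0 := Subsingleton.elim x 0
    rw [this, norm_zero] at hx
    exact absurd hx (not_lt.2 hR.le)
  haveI : Nontrivial (EuclideanSpace ℝ (Fin d)) := by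
    refine nontrivial_of_ne (EuclideanSpace.single ⟨0, hd⟩ 1) 0 fun h => ?_
    have := congrArg (fun v : EuclideanSpace ℝ (Fin d) => v ⟨0, hd⟩) h
    simp [EuclideanSpace.single_apply] at this
  obtain ⟨z, hz⟩ := hint
  obtain ⟨r0, hr0, hrC⟩ := Metric.isOpen_iff.1 isOpen_interior z hz
  have hrC' : ball z r0 ⊆ C := hrC.trans interior_subset
  obtain ⟨M0, hM0⟩ := hB.subset_closedBall 0
  set M := max M0 1 with hMdef
  have hM1 : (1:ℝ) ≤ M := le_max_right _ _
  have hMpos : (0:ℝ) < M := lt_of_lt_of_le one_pos hM1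
  have hCM : C ⊆ closedBall 0 M := hM0.trans (closedBall_subset_closedBall (le_max_left _ _))
  set ρ := min r0 M with hρdef
  have hρ0 : 0 < ρ := lt_min hr0 hMpos
  have hρM : ρ ≤ M := min_le_right _ _
  have hballC : ball z ρ ⊆ C := (ball_subset_ball (min_le_left _ _)).trans hrC'
  refine ⟨3*M, by linarith, (ρ/(3*M))^d, pow_pos (div_pos hρ0 (by linarith)) d, ?_⟩
  intro x hx s hs
  obtain ⟨φ, a, ha, hxK, hsub⟩ := hcsap x hx
  have ha0 : (0:ℝ) < a := lt_of_lt_of_le one_pos ha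
  have h3aM : (0:ℝ) < 3 * a * M := by positivity
  set K := φ '' (a • C) with hKdef
  have hKconv : Convex ℝ K := by
    have h1 : Convex ℝ (a • C) := hC.smul a
    have h2 := h1.affine_image φ.toRealAffineIsometryEquiv.toAffineIsometry.toAffineMap
    simpa [Set.image_image] using h2
  set w := φ (a • z) with hwdef
  have hwK : w ∈ K := ⟨a • z, Set.smul_mem_smul_set (hballC (mem_ball_self hρ0)), rfl⟩
  obtain ⟨u₀, hu₀, hu₀x⟩ := hxK
  have hxK' : x ∈ K := ⟨u₀, hu₀, hu₀x⟩
  have hu₀n : ‖u₀‖ ≤ a * M := by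
    obtain ⟨c₀, hc₀, rfl⟩ := hu₀
    have : ‖c₀‖ ≤ M := by simpa using hCM hc₀
    calc ‖a • c₀‖ = a * ‖c₀‖ := by rw [norm_smul, Real.norm_of_nonneg ha0.le]
    _ ≤ a * M := by nlinarith
  have hwx : dist w x ≤ 2 * (a * M) := by
    rw [hwdef, ← hu₀x, φ.dist_eq]
    calc dist (a • z) u₀ ≤ ‖a • z‖ + ‖u₀‖ := by
          rw [dist_eq_norm]; exact norm_sub_le _ _
    _ ≤ a * M + a * M := by
          refine add_le_add ?_ hu₀n
          have hzn : ‖z‖ ≤ M := by simpa using hCM (hballC (mem_ball_self hρ0))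
          rw [norm_smul, Real.norm_of_nonneg ha0.le]; nlinarith
    _ = 2 * (a * M) := by ring
  have hballK : ball w (a * ρ) ⊆ K := by
    intro y hy
    refine ⟨φ.symm y, ?_, φ.apply_symm_apply y⟩
    have hmem : φ.symm y ∈ ball (a • z) (a * ρ) := by
      rw [mem_ball, show a • z = φ.symm w from (φ.symm_apply_apply _).symm, φ.symm.dist_eq]
      exact mem_ball.1 hy
    have hsb : a • ball z ρ = ball (a • z) (a * ρ) := by
      rw [_root_.smul_ball ha0.ne', Real.norm_of_nonneg ha0.le]
    rw [← hsb] at hmem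
    exact Set.smul_set_mono hballC hmem
  set t := s / (3 * a * M) with htdef
  have ht0 : 0 < t := div_pos hs.1 h3aM
  have hts : t * (3 * a * M) = s := div_mul_cancel₀ s h3aM.ne'
  have ht1 : t ≤ 1 := by
    rw [htdef, div_le_one h3aM]
    nlinarith [hs.2, hs.1]
  set w' := x + t • (w - x) with hw'def
  have key : ball w' (t * (a * ρ)) ⊆ {y | f y ≤ f x} ∩ ball x s := by
    intro u hu
    rw [mem_ball] at hu
    constructor
    · apply hsub
      set v := x + t⁻¹ • (u - x) with hvdef
      have hvw : v - w = t⁻¹ • (u - w') := by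
        rw [hvdef, hw'def]
        match_scalars <;> field_simp <;> ring
      have hvK : v ∈ ball w (a * ρ) := by
        rw [mem_ball, dist_eq_norm, hvw, norm_smul,
          Real.norm_of_nonneg (inv_nonneg.2 ht0.le), ← dist_eq_norm]
        calc t⁻¹ * dist u w' < t⁻¹ * (t * (a * ρ)) :=
              mul_lt_mul_of_pos_left hu (inv_pos.2 ht0)
        _ = a * ρ := by field_simp
      have huv : u = (1 - t) • x + t • v := by
        rw [hvdef]
        match_scalars <;> field_simp <;> ring
      rw [huv]
      exact hKconv hxK' (hballK hvK) (by linarith) ht0.le (by ring)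
    · rw [mem_ball]
      have hw'x : dist w' x = t * dist w x := by
        rw [hw'def, dist_eq_norm, add_sub_cancel_left, norm_smul,
          Real.norm_of_nonneg ht0.le, dist_eq_norm]
      calc dist u x ≤ dist u w' + dist w' x := dist_triangle _ _ _
      _ < t * (a * ρ) + t * dist w x := by
            rw [hw'x]; exact add_lt_add_of_lt_of_le hu le_rfl
      _ ≤ t * (a * M) + t * (2 * (a * M)) := by
            refine add_le_add ?_ (mul_le_mul_of_nonneg_left hwx ht0.le)
            calc t * (a * ρ) = t * a * ρ := by ring
            _ ≤ t * a * M := mul_le_mul_of_nonneg_left hρM (mul_nonneg ht0.le ha0.le)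
            _ = t * (a * M) := by ring
      _ = t * (3 * a * M) := by ring
      _ = s := hts
  have hV1 : volume (ball x s) =
      ENNReal.ofReal (s ^ d) * volume (ball (0 : EuclideanSpace ℝ (Fin d)) 1) := by
    simpa [finrank_euclideanSpace_fin] using Measure.addHaar_ball volume x hs.1.le
  have hV2 : volume (ball w' (t * (a * ρ))) =
      ENNReal.ofReal ((t * (a * ρ)) ^ d) * volume (ball (0 : EuclideanSpace ℝ (Fin d)) 1) := by
    simpa [finrank_euclideanSpace_fin] using
      Measure.addHaar_ball volume w'
        (mul_nonneg ht0.le (mul_nonneg ha0.le hρ0.le))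
  calc ENNReal.ofReal ((ρ/(3*M))^d) * volume (ball x s)
      = volume (ball w' (t * (a * ρ))) := by
        rw [hV1, hV2, ← mul_assoc,
          ← ENNReal.ofReal_mul (pow_nonneg (div_nonneg hρ0.le (by linarith)) d)]
        congr 2
        rw [← mul_pow]
        congr 1
        rw [htdef]
        field_simp
  _ ≤ volume ({y | f y ≤ f x} ∩ ball x s) := measure_mono key
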